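/- Lemma A.1: for any matrix X : Matrix (Fin n) (Fin n) ℂ and any Hermitian matrix R : Matrix (Fin n) (Fin n) ℂ, 2 * (Tr(Xᴴ * R * X * R)).re ≤ (Tr(√(Xᴴ * X) * R * √(Xᴴ * X) * R) + Tr(√(X * Xᴴ) * R * √(X * Xᴴ) * R)).re. -/

import Mathlib

open Matrix
open scoped ComplexOrder

noncomputable section

namespace Matrix

/-- The square root of a positive semidefinite matrix, as defined in the older Mathlib
(`Matrix.PosSemidef.sqrt`, since removed). -/
noncomputable def PosSemidef.sqrt {n 𝕜 : Type*} [Fintype n] [RCLike 𝕜] [DecidableEq n]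
    {A : Matrix n n 𝕜} (hA : A.PosSemidef) : Matrix n n 𝕜 :=
  (hA.1.eigenvectorUnitary : Matrix n n 𝕜) * diagonal ((↑) ∘ Real.sqrt ∘ hA.1.eigenvalues) *
    (star hA.1.eigenvectorUnitary : Matrix n n 𝕜)

theorem PosSemidef.posSemidef_sqrt {m : ℕ} {A : Matrix (Fin m) (Fin m) ℂ} (hA : A.PosSemidef) :
    hA.sqrt.PosSemidef := by
  have hD : (diagonal ((↑) ∘ Real.sqrt ∘ hA.1.eigenvalues) : Matrix (Fin m) (Fin m) ℂ).PosSemidef :=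
    posSemidef_diagonal_iff.mpr fun i => Complex.zero_le_real.mpr (Real.sqrt_nonneg _)
  have := hD.mul_mul_conjTranspose_same (hA.1.eigenvectorUnitary : Matrix (Fin m) (Fin m) ℂ)
  rw [PosSemidef.sqrt, star_eq_conjTranspose]
  exact this

theorem PosSemidef.sqrt_mul_self {m : ℕ} {A : Matrix (Fin m) (Fin m) ℂ} (hA : A.PosSemidef) :
    hA.sqrt * hA.sqrt = A := by
  have hU : (star hA.1.eigenvectorUnitary : Matrix (Fin m) (Fin m) ℂ) *
      (hA.1.eigenvectorUnitary : Matrix (Fin m) (Fin m) ℂ) = 1 := Unitary.coe_star_mul_self _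
  conv_rhs => rw [hA.1.spectral_theorem, Unitary.conjStarAlgAut_apply]
  rw [PosSemidef.sqrt]
  simp only [Matrix.mul_assoc]
  rw [← Matrix.mul_assoc (star (hA.1.eigenvectorUnitary : Matrix (Fin m) (Fin m) ℂ)), hU,
    Matrix.one_mul, ← Matrix.mul_assoc (diagonal _), diagonal_mul_diagonal]
  congr 3
  funext i
  simp only [Function.comp_apply]
  exact_mod_cast Real.mul_self_sqrt (hA.eigenvalues_nonneg i)

end Matrix

open Polynomial

set_option maxHeartbeats 1000000

variable {n : ℕ}

/-- Conjugation by a unitary matrix as an algebra homomorphism. -/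
def conjBy (U : Matrix (Fin n) (Fin n) ℂ) (h1 : U * Uᴴ = 1) (h2 : Uᴴ * U = 1) :
    Matrix (Fin n) (Fin n) ℂ →ₐ[ℂ] Matrix (Fin n) (Fin n) ℂ where
  toFun M := U * M * Uᴴ
  map_one' := by show U * 1 * Uᴴ = 1; rw [mul_one, h1]
  map_mul' M N := by
    calc U * (M * N) * Uᴴ = U * M * (Uᴴ * U) * N * Uᴴ := by rw [h2]; noncomm_ring
    _ = U * M * Uᴴ * (U * N * Uᴴ) := by noncomm_ring
  map_zero' := by simp
  map_add' M N := by noncomm_ring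
  commutes' c := by
    simp only [Algebra.algebraMap_eq_smul_one]
    rw [mul_smul_comm, mul_one, smul_mul_assoc, h1]

lemma aeval_diagonal (d : Fin n → ℂ) (p : ℂ[X]) :
    aeval (diagonal d) p = diagonal (fun i => p.eval (d i)) := by
  have h : diagonal d = diagonalAlgHom ℂ d := rfl
  have hfun : (aeval d p : Fin n → ℂ) = fun i => p.eval (d i) := by
    funext i
    rw [show (aeval d p) i = Pi.evalAlgHom ℂ (fun _ => ℂ) i (aeval d p) from rfl,
      ← aeval_algHom_apply]
    simp [coe_aeval_eq_eval]
  rw [h, aeval_algHom_apply]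
  show diagonal (aeval d p) = _
  rw [hfun]

lemma aeval_hermitian {A : Matrix (Fin n) (Fin n) ℂ} (hA : A.IsHermitian) (p : ℂ[X]) :
    aeval A p = (hA.eigenvectorUnitary : Matrix (Fin n) (Fin n) ℂ) *
      diagonal (fun i => p.eval (hA.eigenvalues i : ℂ)) *
      (star hA.eigenvectorUnitary : Matrix (Fin n) (Fin n) ℂ) := by
  have h1 : (hA.eigenvectorUnitary : Matrix (Fin n) (Fin n) ℂ) *
      (hA.eigenvectorUnitary : Matrix (Fin n) (Fin n) ℂ)ᴴ = 1 := by
    rw [← star_eq_conjTranspose]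
    exact (Matrix.mem_unitaryGroup_iff).mp hA.eigenvectorUnitary.2
  have h2 : (hA.eigenvectorUnitary : Matrix (Fin n) (Fin n) ℂ)ᴴ *
      (hA.eigenvectorUnitary : Matrix (Fin n) (Fin n) ℂ) = 1 := by
    rw [← star_eq_conjTranspose]
    exact (Matrix.mem_unitaryGroup_iff').mp hA.eigenvectorUnitary.2
  conv_lhs => rw [hA.spectral_theorem, Unitary.conjStarAlgAut_apply]
  rw [show (hA.eigenvectorUnitary : Matrix (Fin n) (Fin n) ℂ) *
      diagonal (RCLike.ofReal ∘ hA.eigenvalues) *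
      (star hA.eigenvectorUnitary : Matrix (Fin n) (Fin n) ℂ)
      = conjBy _ h1 h2 (diagonal (RCLike.ofReal ∘ hA.eigenvalues)) by
        simp [conjBy, star_eq_conjTranspose]]
  rw [aeval_algHom_apply, aeval_diagonal]
  simp only [conjBy, AlgHom.coe_mk, RingHom.coe_mk, MonoidHom.coe_mk, OneHom.coe_mk,
    star_eq_conjTranspose, Function.comp]
  rfl

lemma sqrt_eq_aeval {A : Matrix (Fin n) (Fin n) ℂ} (hA : A.PosSemidef) (p : ℂ[X])
    (hp : ∀ i, p.eval ((hA.1.eigenvalues i : ℝ) : ℂ) = (Real.sqrt (hA.1.eigenvalues i) : ℂ)) :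
    aeval A p = hA.sqrt := by
  have hd : (fun i => p.eval ((hA.1.eigenvalues i : ℝ) : ℂ))
      = ((↑) ∘ Real.sqrt ∘ hA.1.eigenvalues) := by
    funext i
    simpa using hp i
  rw [aeval_hermitian hA.1 p, Matrix.PosSemidef.sqrt, hd]
  rfl

lemma intertwine_pow {A B Y : Matrix (Fin n) (Fin n) ℂ} (h : Y * B = A * Y) (k : ℕ) :
    Y * B ^ k = A ^ k * Y := by
  induction k with
  | zero => simp
  | succ k ih =>
    rw [pow_succ, pow_succ, ← mul_assoc, ih, mul_assoc, h, ← mul_assoc]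

lemma intertwine_aeval {A B Y : Matrix (Fin n) (Fin n) ℂ} (h : Y * B = A * Y) (p : ℂ[X]) :
    Y * aeval B p = aeval A p * Y := by
  induction p using Polynomial.induction_on' with
  | add p q hp hq => rw [map_add, map_add, mul_add, add_mul, hp, hq]
  | monomial k c =>
    rw [aeval_monomial, aeval_monomial, ← mul_assoc, ← Algebra.commutes, mul_assoc,
      intertwine_pow h, ← mul_assoc, Algebra.commutes]

lemma intertwine_sqrt {A B Y : Matrix (Fin n) (Fin n) ℂ} (hA : A.PosSemidef)
    (hB : B.PosSemidef) (h : Y * B = A * Y) : Y * hB.sqrt = hA.sqrt * Y := by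
  classical
  set s : Finset ℂ :=
    (Finset.image (fun i => ((hA.1.eigenvalues i : ℝ) : ℂ)) Finset.univ) ∪
    (Finset.image (fun i => ((hB.1.eigenvalues i : ℝ) : ℂ)) Finset.univ) with hs
  set p : ℂ[X] := Lagrange.interpolate s id (fun z => (Real.sqrt z.re : ℂ)) with hpdef
  have hinj : Set.InjOn id (s : Set ℂ) := fun a _ b _ hab => hab
  have hnode : ∀ x ∈ s, p.eval x = (Real.sqrt x.re : ℂ) := by
    intro x hx
    have := Lagrange.eval_interpolate_at_node (v := id) (fun z => (Real.sqrt z.re : ℂ)) hinj hx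
    simpa [hpdef] using this
  have hpA : aeval A p = hA.sqrt := by
    refine sqrt_eq_aeval hA p fun i => ?_
    rw [hnode _ (Finset.mem_union_left _ (Finset.mem_image_of_mem _ (Finset.mem_univ i)))]
    simp
  have hpB : aeval B p = hB.sqrt := by
    refine sqrt_eq_aeval hB p fun i => ?_
    rw [hnode _ (Finset.mem_union_right _ (Finset.mem_image_of_mem _ (Finset.mem_univ i)))]
    simp
  rw [← hpA, ← hpB]
  exact intertwine_aeval h p

lemma trace_re_nonneg {M : Matrix (Fin n) (Fin n) ℂ} (hM : M.PosSemidef) :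
    0 ≤ M.trace.re := by
  rw [Matrix.trace, Complex.re_sum]
  refine Finset.sum_nonneg fun i _ => ?_
  have := hM.re_dotProduct_nonneg (Pi.single i 1)
  simpa [dotProduct, Matrix.mulVec, Pi.single_apply, Finset.sum_ite_eq,
    Finset.sum_ite_eq'] using this

lemma trace_conj_le {M N : Matrix (Fin n) (Fin n) ℂ} (hN : (1 - N).PosSemidef) :
    (Matrix.trace (M * N * Mᴴ)).re ≤ (Matrix.trace (M * Mᴴ)).re := by
  have h := trace_re_nonneg (hN.mul_mul_conjTranspose_same M)
  have hexp : M * (1 - N) * Mᴴ = M * Mᴴ - M * N * Mᴴ := by noncomm_ring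
  rw [hexp, Matrix.trace_sub, Complex.sub_re] at h
  linarith

lemma smul_psd {M : Matrix (Fin n) (Fin n) ℂ} (hM : M.PosSemidef) {c : ℝ} (hc : 0 ≤ c) :
    ((c : ℂ) • M).PosSemidef := by
  constructor
  · have : star (c : ℂ) = (c : ℂ) := by simp
    rw [Matrix.IsHermitian, Matrix.conjTranspose_smul, this, hM.1.eq]
  · intro x
    have e : (x.sum fun i xi => x.sum fun j xj => star xi * ((c : ℂ) • M) i j * xj) =
        (c : ℂ) * (x.sum fun i xi => x.sum fun j xj => star xi * M i j * xj) := by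
      simp only [Finsupp.mul_sum, Matrix.smul_apply, smul_eq_mul]
      exact Finsupp.sum_congr fun i _ => Finsupp.sum_congr fun j _ => by ring
    rw [e]
    exact mul_nonneg (by exact_mod_cast Complex.zero_le_real.mpr hc) (hM.2 x)

lemma key_eps (X R : Matrix (Fin n) (Fin n) ℂ) (hR : R.IsHermitian)
    {P Q : Matrix (Fin n) (Fin n) ℂ} (hP : P.PosSemidef) (hQ : Q.PosSemidef)
    (hPP : P * P = Xᴴ * X) (hQQ : Q * Q = X * Xᴴ)
    (hi : Xᴴ * Q = P * Xᴴ) {ε : ℝ} (hε : 0 < ε) :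
    2 * (Matrix.trace (Xᴴ * R * X * R)).re ≤
      (Matrix.trace ((P + (ε : ℂ) • 1) * R * (P + (ε : ℂ) • 1) * R)).re +
      (Matrix.trace ((Q + (ε : ℂ) • 1) * R * (Q + (ε : ℂ) • 1) * R)).re := by
  classical
  set εI : Matrix (Fin n) (Fin n) ℂ := (ε : ℂ) • 1 with hεIdef
  have hεIpsd : εI.PosSemidef := smul_psd Matrix.PosSemidef.one hε.le
  have hεIpd : εI.PosDef := by
    rw [hεIdef, Matrix.smul_one_eq_diagonal]
    exact Matrix.posDef_diagonal_iff.mpr fun i => Complex.zero_lt_real.mpr hε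
  -- positive definite shifted matrices
  have hQεpd : (Q + εI).PosDef := Matrix.PosDef.posSemidef_add hQ hεIpd
  have hPεpd : (P + εI).PosDef := Matrix.PosDef.posSemidef_add hP hεIpd
  have hQε : (Q + εI).PosSemidef := hQεpd.posSemidef
  have hPε : (P + εI).PosSemidef := hPεpd.posSemidef
  set G : Matrix (Fin n) (Fin n) ℂ := hQε.sqrt with hGdef
  set H : Matrix (Fin n) (Fin n) ℂ := hPε.sqrt with hHdef
  have hG : G.PosSemidef := hQε.posSemidef_sqrt
  have hH : H.PosSemidef := hPε.posSemidef_sqrt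
  have hGG : G * G = Q + εI := hQε.sqrt_mul_self
  have hHH : H * H = P + εI := hPε.sqrt_mul_self
  -- invertibility
  have hGdet : IsUnit G.det := by
    have h1 : IsUnit (G.det * G.det) := by
      rw [← Matrix.det_mul, hGG]
      exact (Matrix.isUnit_iff_isUnit_det _).mp hQεpd.isUnit
    exact isUnit_of_mul_isUnit_left h1
  have hHdet : IsUnit H.det := by
    have h1 : IsUnit (H.det * H.det) := by
      rw [← Matrix.det_mul, hHH]
      exact (Matrix.isUnit_iff_isUnit_det _).mp hPεpd.isUnit
    exact isUnit_of_mul_isUnit_left h1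
  have hGl : G⁻¹ * G = 1 := Matrix.nonsing_inv_mul G hGdet
  have hGr : G * G⁻¹ = 1 := Matrix.mul_nonsing_inv G hGdet
  have hHl : H⁻¹ * H = 1 := Matrix.nonsing_inv_mul H hHdet
  have hHr : H * H⁻¹ = 1 := Matrix.mul_nonsing_inv H hHdet
  have hGc1 : ∀ M : Matrix (Fin n) (Fin n) ℂ, G * (G⁻¹ * M) = M := fun M => by
    rw [← Matrix.mul_assoc, hGr, Matrix.one_mul]
  have hGc2 : ∀ M : Matrix (Fin n) (Fin n) ℂ, G⁻¹ * (G * M) = M := fun M => by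
    rw [← Matrix.mul_assoc, hGl, Matrix.one_mul]
  have hHc1 : ∀ M : Matrix (Fin n) (Fin n) ℂ, H * (H⁻¹ * M) = M := fun M => by
    rw [← Matrix.mul_assoc, hHr, Matrix.one_mul]
  have hHc2 : ∀ M : Matrix (Fin n) (Fin n) ℂ, H⁻¹ * (H * M) = M := fun M => by
    rw [← Matrix.mul_assoc, hHl, Matrix.one_mul]
  have hGinvH : (G⁻¹)ᴴ = G⁻¹ := by rw [Matrix.conjTranspose_nonsing_inv, hG.1.eq]
  have hHinvH : (H⁻¹)ᴴ = H⁻¹ := by rw [Matrix.conjTranspose_nonsing_inv, hH.1.eq]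
  -- intertwining
  have hiε : Xᴴ * (Q + εI) = (P + εI) * Xᴴ := by
    rw [Matrix.mul_add, Matrix.add_mul, hi, hεIdef, mul_smul_comm,
      smul_mul_assoc, mul_one, one_mul]
  have iGH : Xᴴ * G = H * Xᴴ := intertwine_sqrt hPε hQε hiε
  have iGH' : G * X = X * H := by
    have := congrArg Matrix.conjTranspose iGH
    simpa [Matrix.conjTranspose_mul, hG.1.eq, hH.1.eq] using this
  have iHG : Xᴴ * G⁻¹ = H⁻¹ * Xᴴ := by
    calc Xᴴ * G⁻¹ = H⁻¹ * (H * Xᴴ) * G⁻¹ := by rw [hHc2]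
    _ = H⁻¹ * (Xᴴ * G) * G⁻¹ := by rw [iGH]
    _ = H⁻¹ * Xᴴ * (G * G⁻¹) := by simp only [Matrix.mul_assoc]
    _ = H⁻¹ * Xᴴ := by rw [hGr, Matrix.mul_one]
  have iHG' : G⁻¹ * X = X * H⁻¹ := by
    have := congrArg Matrix.conjTranspose iHG
    simpa [Matrix.conjTranspose_mul, hGinvH, hHinvH] using this
  -- the contraction W
  set W : Matrix (Fin n) (Fin n) ℂ := G⁻¹ * X * H⁻¹ with hWdef
  set K : Matrix (Fin n) (Fin n) ℂ := G⁻¹ * G⁻¹ with hKdef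
  set L : Matrix (Fin n) (Fin n) ℂ := H⁻¹ * H⁻¹ with hLdef
  have hKH : Kᴴ = K := by rw [hKdef, Matrix.conjTranspose_mul, hGinvH]
  have hLH : Lᴴ = L := by rw [hLdef, Matrix.conjTranspose_mul, hHinvH]
  have hWK : W = K * X := by
    rw [hWdef, hKdef, Matrix.mul_assoc, ← iHG', Matrix.mul_assoc]
  have hWL : W = X * L := by
    rw [hWdef, hLdef, iHG', Matrix.mul_assoc]
  have hWH1 : Wᴴ = Xᴴ * K := by rw [hWK, Matrix.conjTranspose_mul, hKH]
  have hWH2 : Wᴴ = L * Xᴴ := by rw [hWL, Matrix.conjTranspose_mul, hLH]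
  have hXW : G * W * H = X := by
    rw [hWdef]
    simp only [Matrix.mul_assoc, hHl, Matrix.mul_one, hGc1]
  clear_value W K L
  -- 1 - W Wᴴ and 1 - Wᴴ W are PSD
  set C₁ : Matrix (Fin n) (Fin n) ℂ := (ε : ℂ) • Q + (ε : ℂ) • Q + ((ε : ℂ) * ε) • 1
    with hC₁def
  set C₂ : Matrix (Fin n) (Fin n) ℂ := (ε : ℂ) • P + (ε : ℂ) • P + ((ε : ℂ) * ε) • 1
    with hC₂def
  have hC₁psd : C₁.PosSemidef := by
    refine ((smul_psd hQ hε.le).add (smul_psd hQ hε.le)).add ?_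
    rw [show ((ε : ℂ) * ε) = ((ε * ε : ℝ) : ℂ) by push_cast; ring]
    exact smul_psd Matrix.PosSemidef.one (mul_nonneg hε.le hε.le)
  have hC₂psd : C₂.PosSemidef := by
    refine ((smul_psd hP hε.le).add (smul_psd hP hε.le)).add ?_
    rw [show ((ε : ℂ) * ε) = ((ε * ε : ℝ) : ℂ) by push_cast; ring]
    exact smul_psd Matrix.PosSemidef.one (mul_nonneg hε.le hε.le)
  have hsplit₁ : (Q + εI) * (Q + εI) = X * Xᴴ + C₁ := by
    rw [hC₁def, hεIdef, ← hQQ]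
    simp only [add_mul, mul_add, smul_mul_assoc, mul_smul_comm, one_mul, mul_one, smul_smul, smul_add]
    abel
  have hsplit₂ : (H * H) * (H * H) = Xᴴ * X + C₂ := by
    rw [hHH, hC₂def, hεIdef, ← hPP]
    simp only [add_mul, mul_add, smul_mul_assoc, mul_smul_comm, one_mul, mul_one, smul_smul, smul_add]
    abel
  have hKGG : K * ((G * G) * (G * G)) * K = 1 := by
    rw [hKdef]
    simp only [Matrix.mul_assoc, hGc1, hGc2, hGl, hGr, Matrix.mul_one]
  have hLHH : L * ((H * H) * (H * H)) * L = 1 := by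
    rw [hLdef]
    simp only [Matrix.mul_assoc, hHc1, hHc2, hHl, hHr, Matrix.mul_one]
  have hWWpsd : (1 - W * Wᴴ).PosSemidef := by
    have key : K * C₁ * Kᴴ = 1 - W * Wᴴ := by
      have hC₁eq : C₁ = (Q + εI) * (Q + εI) - X * Xᴴ := by rw [hsplit₁]; abel
      rw [hKH, hC₁eq, Matrix.mul_sub, Matrix.sub_mul, ← hGG, hKGG, hWK,
        Matrix.conjTranspose_mul, hKH]
      simp only [Matrix.mul_assoc]
    rw [← key]
    exact hC₁psd.mul_mul_conjTranspose_same K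
  have hWWpsd' : (1 - Wᴴ * W).PosSemidef := by
    have key : L * C₂ * Lᴴ = 1 - Wᴴ * W := by
      have hC₂eq : C₂ = (H * H) * (H * H) - Xᴴ * X := by rw [hsplit₂]; abel
      rw [hLH, hC₂eq, Matrix.mul_sub, Matrix.sub_mul, hLHH, hWL,
        Matrix.conjTranspose_mul, hLH]
      simp only [Matrix.mul_assoc]
    rw [← key]
    exact hC₂psd.mul_mul_conjTranspose_same L
  -- the two conjugated resolvents
  set M₁ : Matrix (Fin n) (Fin n) ℂ := G * R * G with hM₁def
  set M₂ : Matrix (Fin n) (Fin n) ℂ := H * R * H with hM₂def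
  clear_value M₁ M₂
  have hM₁H : M₁ᴴ = M₁ := by
    rw [hM₁def, Matrix.conjTranspose_mul, Matrix.conjTranspose_mul, hG.1.eq, hR.eq,
      Matrix.mul_assoc]
  have hM₂H : M₂ᴴ = M₂ := by
    rw [hM₂def, Matrix.conjTranspose_mul, Matrix.conjTranspose_mul, hH.1.eq, hR.eq,
      Matrix.mul_assoc]
  -- trace of CᴴC is nonnegative
  set C : Matrix (Fin n) (Fin n) ℂ := M₁ * W - W * M₂ with hCdef
  clear_value C
  have hCC : 0 ≤ (Matrix.trace (Cᴴ * C)).re :=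
    trace_re_nonneg (Matrix.posSemidef_conjTranspose_mul_self C)
  have hCH : Cᴴ = Wᴴ * M₁ - M₂ * Wᴴ := by
    rw [hCdef, Matrix.conjTranspose_sub, Matrix.conjTranspose_mul, Matrix.conjTranspose_mul,
      hM₁H, hM₂H]
  have hCCexp : Cᴴ * C =
      Wᴴ * M₁ * M₁ * W + M₂ * Wᴴ * W * M₂ - Wᴴ * M₁ * W * M₂ - M₂ * Wᴴ * M₁ * W := by
    rw [hCH, hCdef]
    noncomm_ring
  have hstar : Matrix.trace (M₂ * Wᴴ * M₁ * W) = star (Matrix.trace (Wᴴ * M₁ * W * M₂)) := by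
    rw [← Matrix.trace_conjTranspose]
    refine congrArg Matrix.trace ?_
    simp only [Matrix.conjTranspose_mul, hM₁H, hM₂H, Matrix.conjTranspose_conjTranspose,
      Matrix.mul_assoc]
  have hre : (Matrix.trace (Cᴴ * C)).re =
      (Matrix.trace (Wᴴ * M₁ * M₁ * W)).re + (Matrix.trace (M₂ * Wᴴ * W * M₂)).re
        - 2 * (Matrix.trace (Wᴴ * M₁ * W * M₂)).re := by
    rw [hCCexp, Matrix.trace_sub, Matrix.trace_sub, Matrix.trace_add, hstar]
    simp only [Complex.sub_re, Complex.add_re, Complex.conj_re, RCLike.star_def]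
    ring
  -- the two quadratic terms are bounded
  have ht1 : (Matrix.trace (Wᴴ * M₁ * M₁ * W)).re ≤ (Matrix.trace (M₁ * M₁)).re := by
    have e : Matrix.trace (Wᴴ * M₁ * M₁ * W) = Matrix.trace (M₁ * (W * Wᴴ) * M₁ᴴ) := by
      rw [Matrix.trace_mul_comm (Wᴴ * M₁ * M₁) W]
      rw [show W * (Wᴴ * M₁ * M₁) = (W * Wᴴ * M₁) * M₁ by simp only [Matrix.mul_assoc]]
      rw [Matrix.trace_mul_comm (W * Wᴴ * M₁) M₁, hM₁H]
      congr 1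
      simp only [Matrix.mul_assoc]
    have e2 : Matrix.trace (M₁ * M₁ᴴ) = Matrix.trace (M₁ * M₁) := by rw [hM₁H]
    rw [e, ← e2]
    exact trace_conj_le hWWpsd
  have ht2 : (Matrix.trace (M₂ * Wᴴ * W * M₂)).re ≤ (Matrix.trace (M₂ * M₂)).re := by
    have e : Matrix.trace (M₂ * Wᴴ * W * M₂) = Matrix.trace (M₂ * (Wᴴ * W) * M₂ᴴ) := by
      rw [hM₂H]
      refine congrArg Matrix.trace ?_
      simp only [Matrix.mul_assoc]
    have e2 : Matrix.trace (M₂ * M₂ᴴ) = Matrix.trace (M₂ * M₂) := by rw [hM₂H]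
    rw [e, ← e2]
    exact trace_conj_le hWWpsd'
  -- rewriting the mixed trace
  have hXform : Xᴴ = H * Wᴴ * G := by
    rw [← hXW]
    simp only [Matrix.conjTranspose_mul, hH.1.eq, hG.1.eq, Matrix.mul_assoc]
  have e4 : Matrix.trace (Xᴴ * R * X * R) = Matrix.trace (Wᴴ * M₁ * W * M₂) := by
    have h1 : Xᴴ * R * X * R = H * (Wᴴ * M₁ * W * (H * R)) := by
      rw [hXform, ← hXW, hM₁def]
      simp only [Matrix.mul_assoc]
    rw [h1, Matrix.trace_mul_comm, hM₂def]
    refine congrArg Matrix.trace ?_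
    simp only [Matrix.mul_assoc]
  have e5 : Matrix.trace (M₁ * M₁) = Matrix.trace ((Q + εI) * R * (Q + εI) * R) := by
    rw [show M₁ * M₁ = G * (R * G * G * R * G) from by
      rw [hM₁def]; simp only [Matrix.mul_assoc]]
    rw [Matrix.trace_mul_comm]
    rw [show R * G * G * R * G * G = R * (G * G) * R * (G * G) from by
      simp only [Matrix.mul_assoc]]
    rw [hGG, Matrix.trace_mul_comm (R * (Q + εI) * R) (Q + εI)]
    refine congrArg Matrix.trace ?_
    simp only [Matrix.mul_assoc]
  have e6 : Matrix.trace (M₂ * M₂) = Matrix.trace ((P + εI) * R * (P + εI) * R) := by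
    rw [show M₂ * M₂ = H * (R * H * H * R * H) from by
      rw [hM₂def]; simp only [Matrix.mul_assoc]]
    rw [Matrix.trace_mul_comm]
    rw [show R * H * H * R * H * H = R * (H * H) * R * (H * H) from by
      simp only [Matrix.mul_assoc]]
    rw [hHH, Matrix.trace_mul_comm (R * (P + εI) * R) (P + εI)]
    refine congrArg Matrix.trace ?_
    simp only [Matrix.mul_assoc]
  have e4' := congrArg Complex.re e4
  have e5' := congrArg Complex.re e5
  have e6' := congrArg Complex.re e6
  rw [hεIdef] at e5' e6'
  linarith [hCC, ht1, ht2, hre, e4', e5', e6']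

end

noncomputable section
set_option maxHeartbeats 1000000

/-- **Lemma A.1**: for any matrix `X` and any Hermitian matrix `R`,
`2 Re Tr(Xᴴ R X R) ≤ Re (Tr(√(XᴴX) R √(XᴴX) R) + Tr(√(XXᴴ) R √(XXᴴ) R))`. -/
theorem lemma_A1 {n : ℕ} (X R : Matrix (Fin n) (Fin n) ℂ) (hR : R.IsHermitian) :
    2 * (Matrix.trace (Xᴴ * R * X * R)).re ≤
      (Matrix.trace ((Matrix.posSemidef_conjTranspose_mul_self X).sqrt * R *
          (Matrix.posSemidef_conjTranspose_mul_self X).sqrt * R)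
        + Matrix.trace ((Matrix.posSemidef_self_mul_conjTranspose X).sqrt * R *
          (Matrix.posSemidef_self_mul_conjTranspose X).sqrt * R)).re := by
  have hA := Matrix.posSemidef_conjTranspose_mul_self X
  have hB := Matrix.posSemidef_self_mul_conjTranspose X
  set P : Matrix (Fin n) (Fin n) ℂ := hA.sqrt with hPdef
  set Q : Matrix (Fin n) (Fin n) ℂ := hB.sqrt with hQdef
  have hP : P.PosSemidef := hA.posSemidef_sqrt
  have hQ : Q.PosSemidef := hB.posSemidef_sqrt
  have hPP : P * P = Xᴴ * X := hA.sqrt_mul_self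
  have hQQ : Q * Q = X * Xᴴ := hB.sqrt_mul_self
  have hi : Xᴴ * Q = P * Xᴴ :=
    intertwine_sqrt hA hB (Matrix.mul_assoc Xᴴ X Xᴴ).symm
  set f : ℝ → ℝ := fun ε =>
    (Matrix.trace ((P + (ε : ℂ) • 1) * R * (P + (ε : ℂ) • 1) * R)
      + Matrix.trace ((Q + (ε : ℂ) • 1) * R * (Q + (ε : ℂ) • 1) * R)).re with hfdef
  have h1 : Continuous fun ε : ℝ => P + (ε : ℂ) • (1 : Matrix (Fin n) (Fin n) ℂ) :=
    continuous_const.add (Complex.continuous_ofReal.smul continuous_const)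
  have h2 : Continuous fun ε : ℝ => Q + (ε : ℂ) • (1 : Matrix (Fin n) (Fin n) ℂ) :=
    continuous_const.add (Complex.continuous_ofReal.smul continuous_const)
  have hcont : Continuous f := by
    rw [hfdef]
    exact Complex.continuous_re.comp
      (((((h1.matrix_mul continuous_const).matrix_mul h1).matrix_mul
          continuous_const).matrix_trace).add
        ((((h2.matrix_mul continuous_const).matrix_mul h2).matrix_mul
          continuous_const).matrix_trace))
  have hlim : Filter.Tendsto f (nhdsWithin 0 (Set.Ioi 0)) (nhds (f 0)) :=
    (hcont.tendsto 0).mono_left nhdsWithin_le_nhds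
  have hev : ∀ᶠ ε in nhdsWithin (0 : ℝ) (Set.Ioi 0),
      2 * (Matrix.trace (Xᴴ * R * X * R)).re ≤ f ε := by
    refine eventually_nhdsWithin_of_forall fun ε hε => ?_
    have := key_eps X R hR hP hQ hPP hQQ hi (Set.mem_Ioi.mp hε)
    rw [hfdef]
    simpa [Complex.add_re] using this
  have hfin : 2 * (Matrix.trace (Xᴴ * R * X * R)).re ≤ f 0 := ge_of_tendsto hlim hev
  rw [hfdef] at hfin
  simpa using hfin
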